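/- arXiv:2102.00657 — 2 statements merged into one kernel-verified Lean document; each statement's English description precedes it below -/
import Mathlib

section
/- Let β > 0 and suppose F: [0,∞)×ℝ³×ℝ³ → ℝ satisfies |F(t,x,v)| ≤ R·e^{-β(|x|²+|v|²)} for all t, x, v. Then for all t ≥ 0 and all x, v ∈ ℝ³: ∫₀^t ∫_{ℝ³} |v-u| · |F(τ, x+τ(v-u), u)| · |F(τ, x, v)| du dτ ≤ C β^{-2} R² e^{-β(|x|²+|v|²)} for a universal constant C > 0. -/
open MeasureTheory Real
open scoped RealInnerProductSpace

local notation "E3" => EuclideanSpace ℝ (Fin 3)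

-- Gaussian integral on E3
lemma gauss_int3 {β : ℝ} (hβ : 0 < β) :
    ∫ u : E3, Real.exp (-β * ‖u‖ ^ 2) = (π / β) ^ ((3:ℝ) / 2) := by
  rw [GaussianFourier.integral_rexp_neg_mul_sq_norm hβ]
  norm_num [finrank_euclideanSpace_fin]

lemma gauss_integrable3 {β : ℝ} (hβ : 0 < β) :
    Integrable (fun u : E3 => Real.exp (-β * ‖u‖ ^ 2)) := by
  have h := (GaussianFourier.integrable_cexp_neg_mul_sq_norm_add (V := E3)
      (b := (β : ℂ)) (by simpa using hβ) 0 0).norm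
  convert h using 2 with u
  rw [Complex.norm_exp]
  push_cast
  norm_num
  left
  norm_cast

lemma r_exp_bound {β r : ℝ} (hβ : 0 < β) (hr : 0 ≤ r) :
    r * Real.exp (-β * r ^ 2) ≤ Real.sqrt (2 / β) * Real.exp (-(β/2) * r ^ 2) := by
  have h1 : (β/2) * r ^ 2 ≤ Real.exp ((β/2) * r ^ 2) :=
    le_trans (by linarith [Real.add_one_le_exp ((β/2) * r ^ 2)]) le_rfl
  have h2 : r ^ 2 ≤ (2 / β) * Real.exp ((β/2) * r ^ 2) := by
    rw [div_mul_eq_mul_div, le_div_iff₀ hβ]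
    nlinarith [Real.exp_pos ((β/2) * r ^ 2)]
  have hsq : Real.exp ((β/2) * r ^ 2) ≤ Real.exp ((β/2) * r ^ 2) ^ 2 :=
    le_self_pow₀ (Real.one_le_exp (by positivity)) (by norm_num)
  have h4 : r ^ 2 ≤ (2/β) * Real.exp ((β/2) * r ^ 2) ^ 2 :=
    h2.trans (mul_le_mul_of_nonneg_left hsq (by positivity))
  have h3 : r ≤ Real.sqrt (2/β) * Real.exp ((β/2) * r ^ 2) := by
    have := Real.sqrt_le_sqrt h4
    rwa [Real.sqrt_sq hr, Real.sqrt_mul (by positivity), Real.sqrt_sq (Real.exp_pos _).le] at this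
  calc r * Real.exp (-β * r ^ 2)
      ≤ (Real.sqrt (2/β) * Real.exp ((β/2) * r ^ 2)) * Real.exp (-β * r ^ 2) :=
        mul_le_mul_of_nonneg_right h3 (Real.exp_pos _).le
    _ = Real.sqrt (2/β) * Real.exp (-(β/2) * r ^ 2) := by
        rw [mul_assoc, ← Real.exp_add]; ring_nf

lemma norm_gauss_integrable3 {β : ℝ} (hβ : 0 < β) (v : E3) :
    Integrable (fun u : E3 => ‖v - u‖ * Real.exp (-β * ‖u‖ ^ 2)) := by
  have hg : Integrable (fun u : E3 =>
      ‖v‖ * Real.exp (-β * ‖u‖ ^ 2) + Real.sqrt (2/β) * Real.exp (-(β/2) * ‖u‖ ^ 2)) :=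
    ((gauss_integrable3 hβ).const_mul _).add
      (((gauss_integrable3 (by linarith : (0:ℝ) < β/2)).const_mul _))
  refine Integrable.mono' hg ?_ (Filter.Eventually.of_forall fun u => ?_)
  · exact (Continuous.aestronglyMeasurable (by continuity))
  · rw [Real.norm_eq_abs, abs_of_nonneg (by positivity)]
    have h1 : ‖v - u‖ ≤ ‖v‖ + ‖u‖ := norm_sub_le _ _
    have h2 : ‖u‖ * Real.exp (-β * ‖u‖^2) ≤ Real.sqrt (2/β) * Real.exp (-(β/2) * ‖u‖^2) :=
      r_exp_bound hβ (norm_nonneg u)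
    nlinarith [Real.exp_pos (-β * ‖u‖^2), norm_nonneg v, norm_nonneg u]

lemma disp_bound {β : ℝ} (hβ : 0 < β) (t : ℝ) (x w : E3) :
    ∫ τ in Set.Icc (0:ℝ) t, ‖w‖ * Real.exp (-β * ‖x + τ • w‖ ^ 2)
      ≤ Real.sqrt (π / β) := by
  by_cases hw : w = 0
  · simp [hw, Real.sqrt_nonneg]
  have hnw : (0:ℝ) < ‖w‖ := norm_pos_iff.mpr hw
  set I : ℝ := ⟪x, w⟫ with hI
  set a : ℝ := I / ‖w‖ ^ 2 with ha
  set b : ℝ := β * ‖w‖ ^ 2 with hb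
  have hbpos : 0 < b := by positivity
  have key : ∀ τ : ℝ, ‖w‖ * Real.exp (-β * ‖x + τ • w‖ ^ 2)
      ≤ ‖w‖ * Real.exp (-b * (τ + a) ^ 2) := by
    intro τ
    have hexp : ‖x + τ • w‖ ^ 2 = ‖x‖ ^ 2 + 2 * (τ * I) + τ ^ 2 * ‖w‖ ^ 2 := by
      rw [norm_add_sq_real, real_inner_smul_right, norm_smul, Real.norm_eq_abs, mul_pow, sq_abs,
        ← hI]
      try ring
    have hcs : I ^ 2 ≤ ‖x‖ ^ 2 * ‖w‖ ^ 2 := by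
      have h := abs_real_inner_le_norm x w
      rw [← hI] at h
      nlinarith [abs_nonneg I, norm_nonneg x, norm_nonneg w, sq_abs I]
    have h5 : I ^ 2 / ‖w‖ ^ 2 ≤ ‖x‖ ^ 2 := by
      rw [div_le_iff₀ (by positivity)]; exact hcs
    have hexp2 : b * (τ + a) ^ 2 = β * τ ^ 2 * ‖w‖ ^ 2 + 2 * β * τ * I
        + β * (I ^ 2 / ‖w‖ ^ 2) := by
      rw [hb, ha]; field_simp; ring
    refine mul_le_mul_of_nonneg_left (Real.exp_le_exp.mpr ?_) (norm_nonneg w)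
    rw [hexp]
    nlinarith [hβ.le]
  have hInt : Integrable (fun τ : ℝ => ‖w‖ * Real.exp (-b * (τ + a) ^ 2)) :=
    ((integrable_exp_neg_mul_sq hbpos).comp_add_right a).const_mul _
  have step1 : ∫ τ in Set.Icc (0:ℝ) t, ‖w‖ * Real.exp (-β * ‖x + τ • w‖ ^ 2)
      ≤ ∫ τ in Set.Icc (0:ℝ) t, ‖w‖ * Real.exp (-b * (τ + a) ^ 2) :=
    integral_mono_of_nonneg (Filter.Eventually.of_forall fun τ => by positivity)
      hInt.integrableOn (Filter.Eventually.of_forall fun τ => key τ)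
  have step2 : ∫ τ in Set.Icc (0:ℝ) t, ‖w‖ * Real.exp (-b * (τ + a) ^ 2)
      ≤ ∫ τ : ℝ, ‖w‖ * Real.exp (-b * (τ + a) ^ 2) :=
    setIntegral_le_integral hInt (Filter.Eventually.of_forall fun τ => by positivity)
  have step3 : ∫ τ : ℝ, ‖w‖ * Real.exp (-b * (τ + a) ^ 2) = Real.sqrt (π / β) := by
    rw [integral_const_mul,
      show (∫ τ : ℝ, Real.exp (-b * (τ + a) ^ 2)) = ∫ τ : ℝ, Real.exp (-b * τ ^ 2) from
        integral_add_right_eq_self (fun s => Real.exp (-b * s ^ 2)) a,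
      integral_gaussian, hb,
      show π / (β * ‖w‖ ^ 2) = π / β / ‖w‖ ^ 2 by ring,
      Real.sqrt_div (by positivity) (‖w‖ ^ 2), Real.sqrt_sq (norm_nonneg w)]
    field_simp
  exact step1.trans (step2.trans (le_of_eq step3))

theorem vacuum_loss_term_estimate :
    ∃ C : ℝ, 0 < C ∧
      ∀ (β R : ℝ), 0 < β →
        ∀ F : ℝ → EuclideanSpace ℝ (Fin 3) → EuclideanSpace ℝ (Fin 3) → ℝ,
          (∀ t x v, |F t x v| ≤ R * Real.exp (-β * (‖x‖ ^ 2 + ‖v‖ ^ 2))) →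
          ∀ t : ℝ, 0 ≤ t → ∀ x v : EuclideanSpace ℝ (Fin 3),
            (∫ τ in Set.Icc (0 : ℝ) t,
                ∫ u : EuclideanSpace ℝ (Fin 3),
                  ‖v - u‖ * |F τ (x + τ • (v - u)) u| * |F τ x v|)
              ≤ C * β⁻¹ ^ 2 * R ^ 2 * Real.exp (-β * (‖x‖ ^ 2 + ‖v‖ ^ 2)) := by
  refine ⟨π ^ 2, by positivity, ?_⟩
  intro β R hβ F hF t ht x v
  have hR : 0 ≤ R := by
    have h0 := (abs_nonneg (F 0 0 0)).trans (hF 0 0 0)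
    nlinarith [Real.exp_pos (-β * (‖(0:E3)‖ ^ 2 + ‖(0:E3)‖ ^ 2))]
  set K : ℝ := R ^ 2 * Real.exp (-β * (‖x‖ ^ 2 + ‖v‖ ^ 2)) with hK
  have hKnn : 0 ≤ K := by positivity
  set g : ℝ → E3 → ℝ := fun τ u =>
    ‖v - u‖ * Real.exp (-β * ‖x + τ • (v - u)‖ ^ 2) * (Real.exp (-β * ‖u‖ ^ 2) * K) with hg
  have hcont : Continuous fun p : ℝ × E3 => g p.1 p.2 := by
    simp only [hg]
    fun_prop
  have h_h : Integrable (fun u : E3 => ‖v - u‖ * Real.exp (-β * ‖u‖ ^ 2) * K) :=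
    (norm_gauss_integrable3 hβ v).mul_const K
  have hg_le : ∀ τ u, g τ u ≤ ‖v - u‖ * Real.exp (-β * ‖u‖ ^ 2) * K := by
    intro τ u
    have he1 : Real.exp (-β * ‖x + τ • (v - u)‖ ^ 2) ≤ 1 :=
      Real.exp_le_one_iff.mpr (by nlinarith [sq_nonneg ‖x + τ • (v - u)‖, norm_nonneg (x + τ • (v-u))])
    have : ‖v - u‖ * Real.exp (-β * ‖x + τ • (v - u)‖ ^ 2) ≤ ‖v - u‖ * 1 :=
      mul_le_mul_of_nonneg_left he1 (norm_nonneg _)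
    calc g τ u ≤ (‖v - u‖ * 1) * (Real.exp (-β * ‖u‖ ^ 2) * K) :=
          mul_le_mul_of_nonneg_right this (by positivity)
      _ = ‖v - u‖ * Real.exp (-β * ‖u‖ ^ 2) * K := by ring
  have hg_nn : ∀ τ u, 0 ≤ g τ u := fun τ u => by simp only [hg]; positivity
  have hgτ_int : ∀ τ : ℝ, Integrable (g τ) := by
    intro τ
    refine Integrable.mono' h_h ?_ (Filter.Eventually.of_forall fun u => ?_)
    · exact (hcont.comp (Continuous.prodMk_right τ)).aestronglyMeasurable
    · rw [Real.norm_eq_abs, abs_of_nonneg (hg_nn τ u)]; exact hg_le τ u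
  haveI : IsFiniteMeasure (volume.restrict (Set.Icc (0:ℝ) t)) :=
    ⟨by rw [Measure.restrict_apply_univ]; exact measure_Icc_lt_top⟩
  have hprod : Integrable (fun p : ℝ × E3 => g p.1 p.2)
      ((volume.restrict (Set.Icc (0:ℝ) t)).prod volume) := by
    have hdom : Integrable (fun p : ℝ × E3 => (1:ℝ) * (‖v - p.2‖ * Real.exp (-β * ‖p.2‖ ^ 2) * K))
        ((volume.restrict (Set.Icc (0:ℝ) t)).prod volume) :=
      Integrable.mul_prod (integrable_const (1:ℝ)) h_h
    refine Integrable.mono' hdom hcont.aestronglyMeasurable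
      (Filter.Eventually.of_forall fun p => ?_)
    rw [Real.norm_eq_abs, abs_of_nonneg (hg_nn p.1 p.2), one_mul]
    exact hg_le p.1 p.2
  -- inner bound
  have stepA : ∀ τ : ℝ,
      (∫ u : E3, ‖v - u‖ * |F τ (x + τ • (v - u)) u| * |F τ x v|) ≤ ∫ u, g τ u := by
    intro τ
    refine integral_mono_of_nonneg (Filter.Eventually.of_forall fun u => by positivity)
      (hgτ_int τ) (Filter.Eventually.of_forall fun u => ?_)
    have h1 := hF τ (x + τ • (v - u)) u
    have h2 := hF τ x v
    have hb1 : ‖v - u‖ * |F τ (x + τ • (v - u)) u| * |F τ x v|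
        ≤ ‖v - u‖ * (R * Real.exp (-β * (‖x + τ • (v - u)‖ ^ 2 + ‖u‖ ^ 2)))
          * (R * Real.exp (-β * (‖x‖ ^ 2 + ‖v‖ ^ 2))) := by
      have := mul_le_mul (mul_le_mul_of_nonneg_left h1 (norm_nonneg (v - u))) h2
        (abs_nonneg _) (by positivity)
      exact this
    refine hb1.trans (le_of_eq ?_)
    simp only [hg, hK]
    rw [show -β * (‖x + τ • (v - u)‖ ^ 2 + ‖u‖ ^ 2)
        = -β * ‖x + τ • (v - u)‖ ^ 2 + -β * ‖u‖ ^ 2 by ring, Real.exp_add]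
    ring
  have stepB : (∫ τ in Set.Icc (0:ℝ) t,
        ∫ u : E3, ‖v - u‖ * |F τ (x + τ • (v - u)) u| * |F τ x v|)
      ≤ ∫ τ in Set.Icc (0:ℝ) t, ∫ u, g τ u :=
    integral_mono_of_nonneg
      (Filter.Eventually.of_forall fun τ => integral_nonneg fun u => by positivity)
      hprod.integral_prod_left
      (Filter.Eventually.of_forall stepA)
  have stepC : (∫ τ in Set.Icc (0:ℝ) t, ∫ u, g τ u) = ∫ u, ∫ τ in Set.Icc (0:ℝ) t, g τ u :=
    integral_integral_swap hprod
  have stepD : ∀ u : E3, (∫ τ in Set.Icc (0:ℝ) t, g τ u)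
      ≤ Real.sqrt (π / β) * (Real.exp (-β * ‖u‖ ^ 2) * K) := by
    intro u
    have : (∫ τ in Set.Icc (0:ℝ) t, g τ u)
        = (∫ τ in Set.Icc (0:ℝ) t, ‖v - u‖ * Real.exp (-β * ‖x + τ • (v - u)‖ ^ 2))
          * (Real.exp (-β * ‖u‖ ^ 2) * K) := integral_mul_const _ _
    rw [this]
    exact mul_le_mul_of_nonneg_right (disp_bound hβ t x (v - u)) (by positivity)
  have stepE : (∫ u : E3, ∫ τ in Set.Icc (0:ℝ) t, g τ u)
      ≤ ∫ u : E3, Real.sqrt (π / β) * (Real.exp (-β * ‖u‖ ^ 2) * K) := by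
    refine integral_mono_of_nonneg
      (Filter.Eventually.of_forall fun u => setIntegral_nonneg measurableSet_Icc
        fun τ _ => hg_nn τ u)
      ?_ (Filter.Eventually.of_forall stepD)
    exact (((gauss_integrable3 hβ).mul_const K).const_mul _)
  have stepF : (∫ u : E3, Real.sqrt (π / β) * (Real.exp (-β * ‖u‖ ^ 2) * K))
      = Real.sqrt (π / β) * ((π / β) ^ ((3:ℝ)/2) * K) := by
    rw [integral_const_mul, integral_mul_const, gauss_int3 hβ]
  have hfinal : Real.sqrt (π / β) * ((π / β) ^ ((3:ℝ)/2) * K)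
      = π ^ 2 * β⁻¹ ^ 2 * R ^ 2 * Real.exp (-β * (‖x‖ ^ 2 + ‖v‖ ^ 2)) := by
    have hpb : (0:ℝ) < π / β := by positivity
    rw [Real.sqrt_eq_rpow, ← mul_assoc, ← Real.rpow_add hpb]
    norm_num
    rw [hK, div_pow]
    field_simp
  calc (∫ τ in Set.Icc (0:ℝ) t,
        ∫ u : E3, ‖v - u‖ * |F τ (x + τ • (v - u)) u| * |F τ x v|)
      ≤ ∫ τ in Set.Icc (0:ℝ) t, ∫ u, g τ u := stepB
    _ = ∫ u, ∫ τ in Set.Icc (0:ℝ) t, g τ u := stepC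
    _ ≤ ∫ u : E3, Real.sqrt (π / β) * (Real.exp (-β * ‖u‖ ^ 2) * K) := stepE
    _ = Real.sqrt (π / β) * ((π / β) ^ ((3:ℝ)/2) * K) := stepF
    _ = π ^ 2 * β⁻¹ ^ 2 * R ^ 2 * Real.exp (-β * (‖x‖ ^ 2 + ‖v‖ ^ 2)) := hfinal
end

section
/- Let μ(v) = 1/(ρe^{|v|²}-θ) with ρ > 1, θ ∈ {-1,1}, and suppose u+v = u'+v' and |u|²+|v|² = |u'|²+|v'|². Then μ(u)μ(v)μ(u')μ(v') ρ² e^{|u|²+|v|²} is bounded above and below by positive constants times e^{-|u|²-|v|²} · e^{|u|²+|v|²} · e^{-|u'|²-|v'|²} = e^{-|u|²-|v|²}; more precisely there exist c₁, c₂ > 0 depending only on ρ with c₁ e^{-|u|²-|v|²} ≤ μ(u)μ(v)μ(u')μ(v') ρ² e^{|u|²+|v|²} ≤ c₂ e^{-|u|²-|v|²}. -/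
noncomputable def qMu (ρ θ : ℝ) (v : EuclideanSpace ℝ (Fin 3)) : ℝ :=
  (ρ * Real.exp (‖v‖ ^ 2) - θ)⁻¹

lemma qMu_bounds (ρ θ : ℝ) (hρ : 1 < ρ) (hθ : θ = -1 ∨ θ = 1)
    (w : EuclideanSpace ℝ (Fin 3)) :
    ((ρ + 1) * Real.exp (‖w‖ ^ 2))⁻¹ ≤ qMu ρ θ w ∧
      qMu ρ θ w ≤ ((ρ - 1) * Real.exp (‖w‖ ^ 2))⁻¹ := by
  have hx : (1 : ℝ) ≤ Real.exp (‖w‖ ^ 2) := Real.one_le_exp (by positivity)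
  have hθ1 : -1 ≤ θ ∧ θ ≤ 1 := by rcases hθ with h | h <;> norm_num [h]
  have hlow : (ρ - 1) * Real.exp (‖w‖ ^ 2) ≤ ρ * Real.exp (‖w‖ ^ 2) - θ := by
    nlinarith [hθ1.2, hx]
  have hhigh : ρ * Real.exp (‖w‖ ^ 2) - θ ≤ (ρ + 1) * Real.exp (‖w‖ ^ 2) := by
    nlinarith [hθ1.1, hx]
  have hpos : (0 : ℝ) < (ρ - 1) * Real.exp (‖w‖ ^ 2) := by
    have : (0 : ℝ) < ρ - 1 := by linarith
    positivity
  have hden : (0 : ℝ) < ρ * Real.exp (‖w‖ ^ 2) - θ := lt_of_lt_of_le hpos hlow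
  constructor
  · exact inv_anti₀ hden hhigh
  · exact inv_anti₀ hpos hlow

theorem linearized_kernel_two_sided_bound
    (ρ θ : ℝ) (hρ : 1 < ρ) (hθ : θ = -1 ∨ θ = 1) :
    ∃ c₁ c₂ : ℝ, 0 < c₁ ∧ 0 < c₂ ∧
      ∀ u v u' v' : EuclideanSpace ℝ (Fin 3),
        u + v = u' + v' →
        ‖u‖ ^ 2 + ‖v‖ ^ 2 = ‖u'‖ ^ 2 + ‖v'‖ ^ 2 →
        c₁ * Real.exp (-‖u‖ ^ 2 - ‖v‖ ^ 2)
            ≤ qMu ρ θ u * qMu ρ θ v * qMu ρ θ u' * qMu ρ θ v'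
                * ρ ^ 2 * Real.exp (‖u‖ ^ 2 + ‖v‖ ^ 2) ∧
        qMu ρ θ u * qMu ρ θ v * qMu ρ θ u' * qMu ρ θ v'
                * ρ ^ 2 * Real.exp (‖u‖ ^ 2 + ‖v‖ ^ 2)
            ≤ c₂ * Real.exp (-‖u‖ ^ 2 - ‖v‖ ^ 2) := by
  have hρ0 : (0 : ℝ) < ρ := by linarith
  have hρ1 : (0 : ℝ) < ρ - 1 := by linarith
  have hρ2 : (0 : ℝ) < ρ + 1 := by linarith
  refine ⟨ρ ^ 2 / (ρ + 1) ^ 4, ρ ^ 2 / (ρ - 1) ^ 4, by positivity, by positivity, ?_⟩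
  intro u v u' v' _ hene
  set A := ‖u‖ ^ 2 with hA
  set B := ‖v‖ ^ 2 with hB
  set A' := ‖u'‖ ^ 2 with hA'
  set B' := ‖v'‖ ^ 2 with hB'
  have hu := qMu_bounds ρ θ hρ hθ u
  have hv := qMu_bounds ρ θ hρ hθ v
  have hu' := qMu_bounds ρ θ hρ hθ u'
  have hv' := qMu_bounds ρ θ hρ hθ v'
  have hpu : (0 : ℝ) < ((ρ + 1) * Real.exp A)⁻¹ := by positivity
  have hpv : (0 : ℝ) < ((ρ + 1) * Real.exp B)⁻¹ := by positivity
  have hpu' : (0 : ℝ) < ((ρ + 1) * Real.exp A')⁻¹ := by positivity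
  have hpv' : (0 : ℝ) < ((ρ + 1) * Real.exp B')⁻¹ := by positivity
  have hqu : 0 < qMu ρ θ u := lt_of_lt_of_le hpu hu.1
  have hqv : 0 < qMu ρ θ v := lt_of_lt_of_le hpv hv.1
  have hqu' : 0 < qMu ρ θ u' := lt_of_lt_of_le hpu' hu'.1
  have hqv' : 0 < qMu ρ θ v' := lt_of_lt_of_le hpv' hv'.1
  have hexp : ∀ c : ℝ, 0 < c →
      (c * Real.exp A)⁻¹ * (c * Real.exp B)⁻¹ * (c * Real.exp A')⁻¹ *
          (c * Real.exp B')⁻¹ * ρ ^ 2 * Real.exp (A + B)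
        = ρ ^ 2 / c ^ 4 * Real.exp (-A - B) := by
    intro c hc
    have hE : Real.exp A * Real.exp B * Real.exp A' * Real.exp B' * Real.exp (-A - B)
        = Real.exp (A + B) := by
      rw [← Real.exp_add, ← Real.exp_add, ← Real.exp_add, ← Real.exp_add]
      congr 1; linarith
    have h1 : Real.exp A ≠ 0 := (Real.exp_pos _).ne'
    have h2 : Real.exp B ≠ 0 := (Real.exp_pos _).ne'
    have h3 : Real.exp A' ≠ 0 := (Real.exp_pos _).ne'
    have h4 : Real.exp B' ≠ 0 := (Real.exp_pos _).ne'
    field_simp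
    linear_combination (-1 : ℝ) * hE
  constructor
  · calc ρ ^ 2 / (ρ + 1) ^ 4 * Real.exp (-A - B)
        = ((ρ + 1) * Real.exp A)⁻¹ * ((ρ + 1) * Real.exp B)⁻¹ *
            ((ρ + 1) * Real.exp A')⁻¹ * ((ρ + 1) * Real.exp B')⁻¹ *
            ρ ^ 2 * Real.exp (A + B) := (hexp _ hρ2).symm
      _ ≤ qMu ρ θ u * qMu ρ θ v * qMu ρ θ u' * qMu ρ θ v' * ρ ^ 2 * Real.exp (A + B) := by
          gcongr <;> [exact hu.1; exact hv.1; exact hu'.1; exact hv'.1]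
  · calc qMu ρ θ u * qMu ρ θ v * qMu ρ θ u' * qMu ρ θ v' * ρ ^ 2 * Real.exp (A + B)
        ≤ ((ρ - 1) * Real.exp A)⁻¹ * ((ρ - 1) * Real.exp B)⁻¹ *
            ((ρ - 1) * Real.exp A')⁻¹ * ((ρ - 1) * Real.exp B')⁻¹ *
            ρ ^ 2 * Real.exp (A + B) := by
          gcongr <;> [exact hu.2; exact hv.2; exact hu'.2; exact hv'.2]
      _ = ρ ^ 2 / (ρ - 1) ^ 4 * Real.exp (-A - B) := hexp _ hρ1
end
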